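/- Let (X,d) be a Gromov hyperbolic metric space with basepoint o and let ξ ∈ ∂X be a fixed point of an isometry g of X. Then for all y₁,y₂ in ∂X ∖ {ξ} (or X), the metametric D_{ξ,o} based at ξ satisfies D_{ξ,o}(g(y₁), g(y₂)) ≍ g'(ξ)^{-1} · D_{ξ,o}(y₁, y₂), where g'(ξ) = b^{β_ξ(o, g^{-1}(o))} and the implied constant is independent of g, y₁, y₂. -/

import Mathlib

open Filter

/-- The Gromov product `⟨p|q⟩_b = (1/2)(d(p,b) + d(q,b) - d(p,q))`. -/
noncomputable def gp {X : Type*} [MetricSpace X] (b p q : X) : ℝ :=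
  (dist p b + dist q b - dist p q) / 2

/-- A Gromov sequence (with respect to the basepoint `o`): `⟨u_n|u_m⟩_o → ∞`. -/
def IsGromovSeq {X : Type*} [MetricSpace X] (o : X) (u : ℕ → X) : Prop :=
  Tendsto (fun p : ℕ × ℕ => gp o (u p.1) (u p.2)) atTop atTop

/-- Two Gromov sequences are equivalent (represent the same boundary point) when
`⟨u_n|v_n⟩_o → ∞`. -/
def SeqEquiv {X : Type*} [MetricSpace X] (o : X) (u v : ℕ → X) : Prop :=
  Tendsto (fun n => gp o (u n) (v n)) atTop atTop

/-- The extended Gromov product `⟨p|ξ⟩_b` of a point `p` with the boundary point `ξ`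
represented by the Gromov sequence `u`. -/
noncomputable def gpB {X : Type*} [MetricSpace X] (o b p : X) (u : ℕ → X) : ℝ :=
  sInf {L : ℝ | ∃ v : ℕ → X, IsGromovSeq o v ∧ SeqEquiv o u v ∧
    L = Filter.liminf (fun n => gp b p (v n)) Filter.atTop}

/-- The derivative `g'(ξ) = b^{β_ξ(o, g⁻¹(o))}` of an isometry `g` at the boundary point
`ξ` represented by `u`, where `β_ξ(y,z) = ⟨z|ξ⟩_y - ⟨y|ξ⟩_z`. -/
noncomputable def derivAt {X : Type*} [MetricSpace X] (o : X) (b : ℝ) (u : ℕ → X)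
    (g : X ≃ᵢ X) : ℝ :=
  b ^ (gpB o o (g.symm o) u - gpB o (g.symm o) o u)

/- ### Auxiliary lemmas -/

lemma gp_nonneg {X : Type*} [MetricSpace X] (b p q : X) : 0 ≤ gp b p q := by
  have h := dist_triangle p b q
  have h2 : dist b q = dist q b := dist_comm b q
  unfold gp; linarith

lemma gp_le {X : Type*} [MetricSpace X] (b p q : X) : gp b p q ≤ dist p b := by
  have h := dist_triangle q p b
  have h2 : dist q p = dist p q := dist_comm q p
  unfold gp; linarith

lemma gp_comm {X : Type*} [MetricSpace X] (b p q : X) : gp b p q = gp b q p := by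
  unfold gp; rw [dist_comm p q]; ring

lemma gp_base {X : Type*} [MetricSpace X] (o b p q : X) : gp o p q - dist o b ≤ gp b p q := by
  have h1 := dist_triangle p b o
  have h2 := dist_triangle q b o
  have h3 : dist b o = dist o b := dist_comm b o
  unfold gp; linarith

lemma gp_iso {X : Type*} [MetricSpace X] (g : X ≃ᵢ X) (b p q : X) :
    gp (g b) (g p) (g q) = gp b p q := by
  simp [gp, g.dist_eq]

lemma gp_key_identity {X : Type*} [MetricSpace X] (o z y₁ y₂ w : X) :
    gp z y₁ y₂ - gp z y₁ w - gp z y₂ w =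
      gp o y₁ y₂ - gp o y₁ w - gp o y₂ w - gp z o w + gp o z w := by
  unfold gp
  simp only [dist_comm]
  ring

section
variable {X : Type*} [MetricSpace X] {o : X} {δ₀ : ℝ} {u : ℕ → X}

lemma gp_bddge (b p : X) (v : ℕ → X) :
    IsBoundedUnder (· ≥ ·) atTop (fun n : ℕ => gp b p (v n)) :=
  isBoundedUnder_of ⟨0, fun n => gp_nonneg b p (v n)⟩

lemma gp_bddle (b p : X) (v : ℕ → X) :
    IsBoundedUnder (· ≤ ·) atTop (fun n : ℕ => gp b p (v n)) :=
  isBoundedUnder_of ⟨dist p b, fun n => gp_le b p (v n)⟩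

set_option maxHeartbeats 1000000 in
lemma seqEquiv_self (hu : IsGromovSeq o u) : SeqEquiv o u u := by
  have h : Tendsto (fun n : ℕ => ((n, n) : ℕ × ℕ)) atTop atTop :=
    tendsto_atTop_atTop.mpr fun q =>
      ⟨max q.1 q.2, fun a ha => Prod.le_def.mpr ⟨le_trans (le_max_left _ _) ha,
        le_trans (le_max_right _ _) ha⟩⟩
  exact hu.comp h

/-- two sequences equivalent to `u` are mutually Gromov-close, at any basepoint -/
lemma tendsto_gp_of_equiv (hδ : 0 ≤ δ₀)
    (hhyp : ∀ x y z w : X, min (gp w x y) (gp w y z) - δ₀ ≤ gp w x z)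
    (b : X) {v w : ℕ → X} (hv : SeqEquiv o u v) (hw : SeqEquiv o u w) :
    Tendsto (fun n => gp b (w n) (v n)) atTop atTop := by
  rw [tendsto_atTop]
  intro c
  filter_upwards [tendsto_atTop.mp hv (c + δ₀ + dist o b),
    tendsto_atTop.mp hw (c + δ₀ + dist o b)] with n h1 h2
  have h3 := hhyp (w n) (u n) (v n) o
  have h4 : gp o (w n) (u n) = gp o (u n) (w n) := gp_comm _ _ _
  have h5 := gp_base o b (w n) (v n)
  have hmin : c + δ₀ + dist o b ≤ min (gp o (w n) (u n)) (gp o (u n) (v n)) :=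
    le_min (by rw [h4]; exact h2) h1
  linarith

/-- liminfs of Gromov products against equivalent sequences differ by at most δ₀ -/
lemma liminf_comp (hδ : 0 ≤ δ₀)
    (hhyp : ∀ x y z w : X, min (gp w x y) (gp w y z) - δ₀ ≤ gp w x z)
    (b p : X) {v w : ℕ → X} (hv : SeqEquiv o u v) (hw : SeqEquiv o u w) :
    liminf (fun n => gp b p (w n)) atTop ≤ liminf (fun n => gp b p (v n)) atTop + δ₀ := by
  have hvw := tendsto_gp_of_equiv (o := o) hδ hhyp b hv hw
  have hev : ∀ᶠ n in atTop, gp b p (w n) ≤ gp b p (v n) + δ₀ := by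
    filter_upwards [tendsto_atTop.mp hvw (dist p b)] with n h1
    have h2 := hhyp p (w n) (v n) b
    have h3 := gp_le b p (w n)
    have hmin : min (gp b p (w n)) (gp b (w n) (v n)) = gp b p (w n) :=
      min_eq_left (le_trans h3 h1)
    rw [hmin] at h2
    linarith
  have h4 : liminf (fun n => gp b p (w n)) atTop ≤
      liminf (fun n => gp b p (v n) + δ₀) atTop :=
    liminf_le_liminf hev (gp_bddge b p w)
      (IsBoundedUnder.isCoboundedUnder_ge
        (isBoundedUnder_of ⟨dist p b + δ₀, fun n => add_le_add_left (gp_le b p (v n)) δ₀⟩))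
  rwa [liminf_add_const atTop (fun n => gp b p (v n)) δ₀
    (gp_bddle b p v).isCoboundedUnder_ge (gp_bddge b p v)] at h4

lemma gpB_band (hδ : 0 ≤ δ₀)
    (hhyp : ∀ x y z w : X, min (gp w x y) (gp w y z) - δ₀ ≤ gp w x z)
    (b p : X) {v : ℕ → X} (hvG : IsGromovSeq o v) (hvu : SeqEquiv o u v) :
    liminf (fun n => gp b p (v n)) atTop - δ₀ ≤ gpB o b p u ∧
      gpB o b p u ≤ liminf (fun n => gp b p (v n)) atTop := by
  have hmem : liminf (fun n => gp b p (v n)) atTop ∈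
      {L : ℝ | ∃ w : ℕ → X, IsGromovSeq o w ∧ SeqEquiv o u w ∧
        L = Filter.liminf (fun n => gp b p (w n)) Filter.atTop} :=
    ⟨v, hvG, hvu, rfl⟩
  have hlb : ∀ L ∈ {L : ℝ | ∃ w : ℕ → X, IsGromovSeq o w ∧ SeqEquiv o u w ∧
      L = Filter.liminf (fun n => gp b p (w n)) Filter.atTop},
      liminf (fun n => gp b p (v n)) atTop - δ₀ ≤ L := by
    rintro L ⟨w, hwG, hwu, rfl⟩
    have := liminf_comp (o := o) hδ hhyp b p hwu hvu
    linarith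
  constructor
  · exact le_csInf ⟨_, hmem⟩ hlb
  · exact csInf_le ⟨_, fun L hL => hlb L hL⟩ hmem

lemma eventual_band (hδ : 0 ≤ δ₀)
    (hhyp : ∀ x y z w : X, min (gp w x y) (gp w y z) - δ₀ ≤ gp w x z)
    (hu : IsGromovSeq o u) (b p : X) {ε : ℝ} (hε : 0 < ε) :
    ∀ᶠ n in atTop, liminf (fun k => gp b p (u k)) atTop - ε ≤ gp b p (u n) ∧
      gp b p (u n) ≤ liminf (fun k => gp b p (u k)) atTop + δ₀ + ε := by
  set L := liminf (fun k => gp b p (u k)) atTop with hL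
  have hlow : ∀ᶠ n in atTop, L - ε ≤ gp b p (u n) :=
    (eventually_lt_of_lt_liminf (show L - ε < L by linarith) (gp_bddge b p u)).mono
      fun n hn => hn.le
  obtain ⟨q, hq⟩ := eventually_atTop.mp (tendsto_atTop.mp hu (L + ε + δ₀ + dist o b))
  set N := max q.1 q.2 with hN
  have hNge : ∀ m n, N ≤ m → N ≤ n → L + ε + δ₀ ≤ gp b (u n) (u m) := by
    intro m n hm hn
    have h1 := hq (n, m) (Prod.le_def.mpr
      ⟨le_trans (le_max_left _ _) hn, le_trans (le_max_right _ _) hm⟩)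
    have h2 := gp_base o b (u n) (u m)
    simp only at h1
    linarith
  have hfreq : ∃ᶠ m in atTop, gp b p (u m) < L + ε :=
    frequently_lt_of_liminf_lt (gp_bddle b p u).isCoboundedUnder_ge (by linarith)
  obtain ⟨m, hm, hmN⟩ := (hfreq.and_eventually (eventually_ge_atTop N)).exists
  have hup : ∀ᶠ n in atTop, gp b p (u n) ≤ L + δ₀ + ε := by
    filter_upwards [eventually_ge_atTop N] with n hn
    have h2 := hhyp p (u n) (u m) b
    have h3 := hNge m n hmN hn
    by_contra hcon
    push_neg at hcon
    have h4 : L + δ₀ + ε ≤ min (gp b p (u n)) (gp b (u n) (u m)) :=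
      le_min (by linarith) (by linarith)
    linarith
  exact hlow.and hup

lemma key_bound (hδ : 0 ≤ δ₀)
    (hhyp : ∀ x y z w : X, min (gp w x y) (gp w y z) - δ₀ ≤ gp w x z)
    (hu : IsGromovSeq o u) (z y₁ y₂ : X) :
    |(gp z y₁ y₂ - liminf (fun n => gp z y₁ (u n)) atTop
        - liminf (fun n => gp z y₂ (u n)) atTop)
      - (gp o y₁ y₂ - liminf (fun n => gp o y₁ (u n)) atTop
        - liminf (fun n => gp o y₂ (u n)) atTop)
      - (liminf (fun n => gp o z (u n)) atTop - liminf (fun n => gp z o (u n)) atTop)|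
      ≤ 3 * δ₀ := by
  refine le_of_forall_pos_le_add fun ε hε => ?_
  have hε6 : 0 < ε / 6 := by linarith
  obtain ⟨n, hn⟩ :=
    ((((((eventual_band hδ hhyp hu z y₁ hε6).and (eventual_band hδ hhyp hu z y₂ hε6)).and
      (eventual_band hδ hhyp hu o y₁ hε6)).and (eventual_band hδ hhyp hu o y₂ hε6)).and
      (eventual_band hδ hhyp hu o z hε6)).and (eventual_band hδ hhyp hu z o hε6)).exists
  obtain ⟨⟨⟨⟨⟨⟨h1a, h1b⟩, h2a, h2b⟩, h3a, h3b⟩, h4a, h4b⟩, h5a, h5b⟩, h6a, h6b⟩ := hn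
  have hid := gp_key_identity o z y₁ y₂ (u n)
  rw [abs_le]
  constructor <;> linarith

end

/-- Let `ξ ∈ ∂X` (represented by the Gromov sequence `u`) and let `D = D_{ξ,o}` be a
metametric satisfying `D(y₁,y₂) ≍ b^{-[⟨y₁|y₂⟩_o - ⟨y₁|ξ⟩_o - ⟨y₂|ξ⟩_o]}` (with constant
`K`).  Then there is `C > 0`, independent of `g, y₁, y₂`, such that for every isometry `g`
fixing `ξ` and all points `y₁, y₂`:
`D(g(y₁), g(y₂)) ≍ g'(ξ)⁻¹ · D(y₁,y₂)` up to the multiplicative constant `C`. -/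
theorem metametric_conformal_at_fixed_point {X : Type*} [MetricSpace X] (o : X)
    (b : ℝ) (hb : 1 < b) (δ₀ : ℝ) (hδ : 0 ≤ δ₀)
    (hhyp : ∀ x y z w : X, min (gp w x y) (gp w y z) - δ₀ ≤ gp w x z)
    (u : ℕ → X) (hu : IsGromovSeq o u)
    (D : X → X → ℝ) (K : ℝ) (hK : 1 ≤ K)
    (hD : ∀ y₁ y₂ : X,
      K⁻¹ * b ^ (-(gp o y₁ y₂ - gpB o o y₁ u - gpB o o y₂ u)) ≤ D y₁ y₂ ∧
      D y₁ y₂ ≤ K * b ^ (-(gp o y₁ y₂ - gpB o o y₁ u - gpB o o y₂ u))) :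
    ∃ C : ℝ, 0 < C ∧ ∀ g : X ≃ᵢ X, SeqEquiv o (fun n => g (u n)) u →
      ∀ y₁ y₂ : X,
        C⁻¹ * (derivAt o b u g)⁻¹ * D y₁ y₂ ≤ D (g y₁) (g y₂) ∧
        D (g y₁) (g y₂) ≤ C * (derivAt o b u g)⁻¹ * D y₁ y₂ := by
  have hb0 : (0:ℝ) < b := lt_trans one_pos hb
  have hK0 : (0:ℝ) < K := lt_of_lt_of_le one_pos hK
  refine ⟨K ^ 2 * b ^ (6 * δ₀), by positivity, ?_⟩
  intro g hg y₁ y₂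
  set z := g.symm o with hz
  have hzo : g z = o := g.apply_symm_apply o
  have hgp : ∀ p q : X, gp o (g p) (g q) = gp z p q := by
    intro p q
    conv_lhs => rw [← hzo]
    exact gp_iso g z p q
  have hguG : IsGromovSeq o (fun n => g (u n)) := by
    rw [IsGromovSeq, tendsto_atTop]
    intro c
    filter_upwards [tendsto_atTop.mp hu (c + dist o z)] with p hp
    have h1 := hgp (u p.1) (u p.2)
    have h2 := gp_base o z (u p.1) (u p.2)
    linarith
  have hgu_eq : SeqEquiv o u (fun n => g (u n)) := by
    have heq : (fun n => gp o (u n) (g (u n))) = fun n => gp o (g (u n)) (u n) := by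
      funext n; exact gp_comm o (u n) (g (u n))
    rw [SeqEquiv, heq]
    exact hg
  -- gpB bands
  have huu := seqEquiv_self hu
  have hA1 := gpB_band (o := o) (u := u) hδ hhyp o y₁ hu huu
  have hA2 := gpB_band (o := o) (u := u) hδ hhyp o y₂ hu huu
  have hP := gpB_band (o := o) (u := u) hδ hhyp o z hu huu
  have hQ := gpB_band (o := o) (u := u) hδ hhyp z o hu huu
  have hG1 := gpB_band (o := o) (u := u) hδ hhyp o (g y₁) hguG hgu_eq
  have hG2 := gpB_band (o := o) (u := u) hδ hhyp o (g y₂) hguG hgu_eq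
  have e1 : (fun n => gp o (g y₁) (g (u n))) = fun n => gp z y₁ (u n) :=
    funext fun n => hgp y₁ (u n)
  have e2 : (fun n => gp o (g y₂) (g (u n))) = fun n => gp z y₂ (u n) :=
    funext fun n => hgp y₂ (u n)
  rw [e1] at hG1
  rw [e2] at hG2
  have key := key_bound (o := o) (u := u) hδ hhyp hu z y₁ y₂
  rw [abs_le] at key
  have hgpfix : gp o (g y₁) (g y₂) = gp z y₁ y₂ := hgp y₁ y₂
  -- main exponent comparison
  have hmain_lo : gp o y₁ y₂ - gpB o o y₁ u - gpB o o y₂ u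
      + (gpB o o z u - gpB o z o u) - 6 * δ₀
      ≤ gp o (g y₁) (g y₂) - gpB o o (g y₁) u - gpB o o (g y₂) u := by
    rw [hgpfix]
    linarith [key.1, key.2, hA1.1, hA1.2, hA2.1, hA2.2, hP.1, hP.2, hQ.1, hQ.2,
      hG1.1, hG1.2, hG2.1, hG2.2]
  have hmain_up : gp o (g y₁) (g y₂) - gpB o o (g y₁) u - gpB o o (g y₂) u
      ≤ gp o y₁ y₂ - gpB o o y₁ u - gpB o o y₂ u
      + (gpB o o z u - gpB o z o u) + 6 * δ₀ := by
    rw [hgpfix]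
    linarith [key.1, key.2, hA1.1, hA1.2, hA2.1, hA2.2, hP.1, hP.2, hQ.1, hQ.2,
      hG1.1, hG1.2, hG2.1, hG2.2]
  have hE : derivAt o b u g = b ^ (gpB o o z u - gpB o z o u) := by
    rw [hz]; rfl
  have hDg := hD (g y₁) (g y₂)
  have hDy := hD y₁ y₂
  constructor
  · -- lower bound
    calc (K ^ 2 * b ^ (6 * δ₀))⁻¹ * (derivAt o b u g)⁻¹ * D y₁ y₂
        = K⁻¹ * ((b ^ (6 * δ₀))⁻¹ * ((b ^ (gpB o o z u - gpB o z o u))⁻¹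
            * (K⁻¹ * D y₁ y₂))) := by rw [hE]; ring
      _ ≤ K⁻¹ * ((b ^ (6 * δ₀))⁻¹ * ((b ^ (gpB o o z u - gpB o z o u))⁻¹
            * b ^ (-(gp o y₁ y₂ - gpB o o y₁ u - gpB o o y₂ u)))) := by
          gcongr
          exact (inv_mul_le_iff₀ hK0).mpr hDy.2
      _ = K⁻¹ * b ^ (-(6 * δ₀) + -(gpB o o z u - gpB o z o u)
            + -(gp o y₁ y₂ - gpB o o y₁ u - gpB o o y₂ u)) := by
          rw [Real.rpow_add hb0, Real.rpow_add hb0, Real.rpow_neg hb0.le (6 * δ₀),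
            Real.rpow_neg hb0.le (gpB o o z u - gpB o z o u)]
          ring
      _ ≤ K⁻¹ * b ^ (-(gp o (g y₁) (g y₂) - gpB o o (g y₁) u - gpB o o (g y₂) u)) := by
          gcongr
          · exact hb.le
          · linarith [hmain_up]
      _ ≤ D (g y₁) (g y₂) := hDg.1
  · -- upper bound
    calc D (g y₁) (g y₂)
        ≤ K * b ^ (-(gp o (g y₁) (g y₂) - gpB o o (g y₁) u - gpB o o (g y₂) u)) := hDg.2
      _ ≤ K * b ^ (6 * δ₀ + -(gpB o o z u - gpB o z o u)
            + -(gp o y₁ y₂ - gpB o o y₁ u - gpB o o y₂ u)) := by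
          gcongr
          · exact hb.le
          · linarith [hmain_lo]
      _ = K * (b ^ (6 * δ₀) * ((b ^ (gpB o o z u - gpB o z o u))⁻¹
            * b ^ (-(gp o y₁ y₂ - gpB o o y₁ u - gpB o o y₂ u)))) := by
          rw [Real.rpow_add hb0, Real.rpow_add hb0,
            Real.rpow_neg hb0.le (gpB o o z u - gpB o z o u)]
          ring
      _ ≤ K * (b ^ (6 * δ₀) * ((b ^ (gpB o o z u - gpB o z o u))⁻¹
            * (K * D y₁ y₂))) := by
          gcongr
          exact (inv_mul_le_iff₀ hK0).mp hDy.1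
      _ = K ^ 2 * b ^ (6 * δ₀) * (derivAt o b u g)⁻¹ * D y₁ y₂ := by rw [hE]; ring
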